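/- Let G = (V, E, (V_□, V_◯, V_△)) be a stochastic game and X ⊆ V. Let W be the greatest fixed point of the monotone set map Y ↦ X ∩ (Pre_□(Y) ∪ Pre(Y)), and let P = Edges_□(W, V∖W) = {(u,v) ∈ E : u ∈ W ∩ V_□, v ∉ W}. Then every play v : ℕ → V with v 0 ∈ W such that (v i, v (i+1)) ∉ P for all i satisfies v i ∈ X for all i. (Theorem 1 of the paper: the safety template (P, ∅, ∅) is winning for the safety objective □X.) -/
import Mathlib


/-- A stochastic game `G = (V, E, (V_□, V_◯, V_△))`: a directed graph on `V` in
which every vertex has at least one outgoing edge, together with a partition of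
the vertices into Even (`VE = V_□`), Odd (`VO = V_◯`) and Random (`VR = V_△`). -/
structure SGame (V : Type*) where
  E : Set (V × V)
  VE : Set V
  VO : Set V
  VR : Set V
  serial : ∀ u : V, ∃ w, (u, w) ∈ E
  cover : VE ∪ VO ∪ VR = Set.univ
  dEO : Disjoint VE VO
  dER : Disjoint VE VR
  dOR : Disjoint VO VR

namespace SGame

variable {V : Type*}

/-- `Pre(Y) = {u ∈ V : ∀ w, (u,w) ∈ E → w ∈ Y}`. -/
def Pre (G : SGame V) (Y : Set V) : Set V := {u | ∀ w, (u, w) ∈ G.E → w ∈ Y}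

/-- `Pre_□(Y) = {u ∈ V_□ : ∃ w ∈ Y, (u,w) ∈ E}`. -/
def PreE (G : SGame V) (Y : Set V) : Set V := {u | u ∈ G.VE ∧ ∃ w ∈ Y, (u, w) ∈ G.E}

/-- `Pre_△(Z,Y) = {u ∈ V_△ : (∀ w, (u,w) ∈ E → w ∈ Z) ∧ (∃ w ∈ Y, (u,w) ∈ E)}`. -/
def PreR (G : SGame V) (Z Y : Set V) : Set V :=
  {u | u ∈ G.VR ∧ (∀ w, (u, w) ∈ G.E → w ∈ Z) ∧ ∃ w ∈ Y, (u, w) ∈ G.E}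

lemma Pre_mono (G : SGame V) : Monotone G.Pre :=
  fun _ _ h _ hu w hw => h (hu w hw)

lemma PreE_mono (G : SGame V) : Monotone G.PreE := by
  rintro Y Z h u ⟨h1, w, hw, he⟩
  exact ⟨h1, w, h hw, he⟩

lemma PreR_mono (G : SGame V) {Z Z' Y Y' : Set V} (hZ : Z ⊆ Z') (hY : Y ⊆ Y') :
    G.PreR Z Y ⊆ G.PreR Z' Y' := by
  rintro u ⟨h1, h2, w, hw, he⟩
  exact ⟨h1, fun w hw => hZ (h2 w hw), w, hY hw, he⟩

/-- The monotone map `Y ↦ X ∪ Pre(Y)`. -/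
def attrOp (G : SGame V) (X : Set V) : Set V →o Set V :=
  ⟨fun Y => X ∪ G.Pre Y, fun _ _ h => Set.union_subset_union_right X (G.Pre_mono h)⟩

/-- `Attr(X) = lfp (Y ↦ X ∪ Pre(Y))`. -/
def Attr (G : SGame V) (X : Set V) : Set V := OrderHom.lfp (G.attrOp X)

/-- The monotone map `Y ↦ X ∪ Pre(Y) ∪ Pre_□(Y)`. -/
def attrOpE (G : SGame V) (X : Set V) : Set V →o Set V :=
  ⟨fun Y => X ∪ G.Pre Y ∪ G.PreE Y, fun _ _ h =>
    Set.union_subset_union (Set.union_subset_union_right X (G.Pre_mono h)) (G.PreE_mono h)⟩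

/-- `Attr_□(X) = lfp (Y ↦ X ∪ Pre(Y) ∪ Pre_□(Y))`. -/
def AttrE (G : SGame V) (X : Set V) : Set V := OrderHom.lfp (G.attrOpE X)

/-- The monotone map `Y ↦ X ∪ Pre(Y) ∪ Pre_△(Z,Y)` (for a fixed `Z`). -/
def attrOp' (G : SGame V) (X Z : Set V) : Set V →o Set V :=
  ⟨fun Y => X ∪ G.Pre Y ∪ G.PreR Z Y, fun _ _ h =>
    Set.union_subset_union (Set.union_subset_union_right X (G.Pre_mono h))
      (G.PreR_mono le_rfl h)⟩

/-- The monotone map `Z ↦ lfp (Y ↦ X ∪ Pre(Y) ∪ Pre_△(Z,Y))`. -/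
def attrOuter' (G : SGame V) (X : Set V) : Set V →o Set V :=
  ⟨fun Z => OrderHom.lfp (G.attrOp' X Z), by
    intro Z Z' h
    exact OrderHom.lfp.monotone fun Y =>
      Set.union_subset_union_right _ (G.PreR_mono h le_rfl)⟩

/-- `Attr'(X) = gfp (Z ↦ lfp (Y ↦ X ∪ Pre(Y) ∪ Pre_△(Z,Y)))`. -/
def Attr' (G : SGame V) (X : Set V) : Set V := OrderHom.gfp (G.attrOuter' X)

/-- The monotone map `Y ↦ X ∪ Pre_□(Y) ∪ Pre(Y) ∪ Pre_△(Z,Y)` (for a fixed `Z`). -/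
def attrOpE' (G : SGame V) (X Z : Set V) : Set V →o Set V :=
  ⟨fun Y => X ∪ G.PreE Y ∪ G.Pre Y ∪ G.PreR Z Y, fun _ _ h =>
    Set.union_subset_union
      (Set.union_subset_union (Set.union_subset_union_right X (G.PreE_mono h)) (G.Pre_mono h))
      (G.PreR_mono le_rfl h)⟩

/-- The monotone map `Z ↦ lfp (Y ↦ X ∪ Pre_□(Y) ∪ Pre(Y) ∪ Pre_△(Z,Y))`. -/
def attrOuterE' (G : SGame V) (X : Set V) : Set V →o Set V :=
  ⟨fun Z => OrderHom.lfp (G.attrOpE' X Z), by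
    intro Z Z' h
    exact OrderHom.lfp.monotone fun Y =>
      Set.union_subset_union_right _ (G.PreR_mono h le_rfl)⟩

/-- `Attr'_□(X) = gfp (Z ↦ lfp (Y ↦ X ∪ Pre_□(Y) ∪ Pre(Y) ∪ Pre_△(Z,Y)))`. -/
def AttrE' (G : SGame V) (X : Set V) : Set V := OrderHom.gfp (G.attrOuterE' X)

/-- `Edges_□(X,Y) = {(u,w) ∈ E : u ∈ X ∩ V_□ ∧ w ∈ Y}`. -/
def EdgesE (G : SGame V) (X Y : Set V) : Set (V × V) :=
  {e | e ∈ G.E ∧ e.1 ∈ X ∧ e.1 ∈ G.VE ∧ e.2 ∈ Y}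

/-- A play: an infinite sequence of vertices following the edges of the game. -/
def IsPlay (G : SGame V) (v : ℕ → V) : Prop := ∀ i, (v i, v (i + 1)) ∈ G.E

/-- A play is Random-fair if from every Random vertex occurring infinitely
often, every outgoing edge is taken infinitely often. -/
def RandomFair (G : SGame V) (v : ℕ → V) : Prop :=
  ∀ u ∈ G.VR, {i | v i = u}.Infinite →
    ∀ u', (u, u') ∈ G.E → {i | (v i, v (i + 1)) = (u, u')}.Infinite

/-- The monotone map `Y ↦ X ∩ (Pre_□(Y) ∪ Pre(Y))` of the safety algorithm. -/
def safetyOp (G : SGame V) (X : Set V) : Set V →o Set V :=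
  ⟨fun Y => X ∩ (G.PreE Y ∪ G.Pre Y), fun _ _ h =>
    Set.inter_subset_inter (le_refl X)
      (Set.union_subset_union (G.PreE_mono h) (G.Pre_mono h))⟩

/-- The winning set for the safety objective `□X`:
the greatest fixed point of `Y ↦ X ∩ (Pre_□(Y) ∪ Pre(Y))`. -/
def SafeW (G : SGame V) (X : Set V) : Set V := OrderHom.gfp (G.safetyOp X)

end SGame

/-- **Theorem 1 (safety template)**: with `W` the greatest fixed point of
`Y ↦ X ∩ (Pre_□(Y) ∪ Pre(Y))` and `P = Edges_□(W, V∖W)`, every play starting in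
`W` that never takes an edge of `P` stays in `X` forever. -/
theorem safety_template_winning {V : Type*} [Fintype V] (G : SGame V) (X : Set V)
    (W : Set V) (hW : W = G.SafeW X)
    (P : Set (V × V)) (hP : P = G.EdgesE W Wᶜ)
    (v : ℕ → V) (hplay : G.IsPlay v) (hv0 : v 0 ∈ W)
    (hψP : ∀ i, (v i, v (i + 1)) ∉ P) :
    ∀ i, v i ∈ X := by
  have hfix : W = X ∩ (G.PreE W ∪ G.Pre W) := by
    rw [hW]; exact (OrderHom.map_gfp (G.safetyOp X)).symm
  have hWall : ∀ i, v i ∈ W := by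
    intro i
    induction i with
    | zero => exact hv0
    | succ n ih =>
      have h := hfix ▸ ih
      rcases h.2 with hE | hA
      · by_contra hnot
        exact hψP n (hP ▸ ⟨hplay n, ih, hE.1, hnot⟩)
      · exact hA _ (hplay n)
  intro i
  exact (hfix ▸ hWall i).1
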